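/- Let (A,B,C) be integers with gcd(A,B,C) = 1 and let d | AC - B². Then there exist integers k, ℓ with gcd(k,ℓ,d) = 1 such that for all integers m, n: if Am² + 2Bmn + Cn² ≡ 0 (mod d), then (mk + nℓ)² ≡ 0 (mod d). -/

import Mathlib

lemma gcd_pow_aux (a D : ℕ) (ha : a ≠ 0) (hD : 1 ≤ D) :
    Nat.gcd (a ^ D) D ∣ a ^ (D - 1) := by
  have hg : Nat.gcd (a ^ D) D ≠ 0 := by
    intro h
    have := (Nat.gcd_eq_zero_iff.mp h).2
    omega
  have hpow : a ^ (D - 1) ≠ 0 := pow_ne_zero _ ha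
  rw [← Nat.factorization_le_iff_dvd hg hpow]
  intro p
  have h1 : (Nat.gcd (a ^ D) D).factorization p ≤ (a ^ D).factorization p := by
    exact (Nat.factorization_le_iff_dvd hg (pow_ne_zero _ ha)).mpr (Nat.gcd_dvd_left _ _) p
  have h2 : (Nat.gcd (a ^ D) D).factorization p ≤ D.factorization p := by
    exact (Nat.factorization_le_iff_dvd hg (by omega)).mpr (Nat.gcd_dvd_right _ _) p
  rw [Nat.factorization_pow] at h1 ⊢
  simp only [Finsupp.smul_apply, smul_eq_mul] at h1 ⊢
  rcases Nat.eq_zero_or_pos (a.factorization p) with h | h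
  · simp only [h, Nat.mul_zero] at h1 ⊢
    omega
  · have h3 : D.factorization p < D := Nat.factorization_lt p (by omega)
    calc (Nat.gcd (a ^ D) D).factorization p ≤ D.factorization p := h2
      _ ≤ D - 1 := by omega
      _ ≤ (D - 1) * a.factorization p := Nat.le_mul_of_pos_right _ h

theorem linear_form_captures_quadratic_zeros (A B C : ℤ)
    (hprim : Int.gcd A (Int.gcd B C) = 1) (d : ℤ) (hd : 0 < d)
    (hdvd : d ∣ A * C - B ^ 2) :
    ∃ k ℓ : ℤ, Int.gcd k (Int.gcd ℓ d) = 1 ∧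
      ∀ m n : ℤ, d ∣ A * m ^ 2 + 2 * B * m * n + C * n ^ 2 →
        d ∣ (m * k + n * ℓ) ^ 2 := by
  set D := d.natAbs with hDdef
  have hD1 : 1 ≤ D := by
    have := Int.natAbs_pos.mpr hd.ne'
    omega
  have hDd : (D : ℤ) = d := Int.natAbs_of_nonneg hd.le
  set a := A.natAbs with hadef
  set gn : ℕ := Nat.gcd (a ^ D) D with hgn
  set g : ℤ := (gn : ℤ) with hgdef
  have hgd : g ∣ d := by
    rw [hgdef, ← hDd]
    exact_mod_cast Nat.gcd_dvd_right _ _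
  set w : ℤ := d / g with hwdef
  have hdgw : d = g * w := (Int.mul_ediv_cancel' hgd).symm
  set Qe : ℤ := A * g ^ 2 + 2 * B * g * w + C * w ^ 2 with hQe
  have hgne : gn ≠ 0 := by
    intro h
    have := (Nat.gcd_eq_zero_iff.mp h).2
    omega
  -- key coprimality
  have key : Int.gcd Qe d = 1 := by
    by_contra hne
    have hgcd0 : Int.gcd Qe d ≠ 0 := by
      intro h
      exact hd.ne' (Int.gcd_eq_zero_iff.mp h).2
    obtain ⟨p, hp, hpdvd⟩ := Nat.exists_prime_and_dvd hne
    have hpQ : (p : ℤ) ∣ Qe := dvd_trans (Int.natCast_dvd_natCast.mpr hpdvd) (Int.gcd_dvd_left _ _)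
    have hpd : (p : ℤ) ∣ d := dvd_trans (Int.natCast_dvd_natCast.mpr hpdvd) (Int.gcd_dvd_right _ _)
    have hpprime : Prime (p : ℤ) := Nat.prime_iff_prime_int.mp hp
    by_cases hpA : (p : ℤ) ∣ A
    · -- p ∣ A
      have hpB : (p : ℤ) ∣ B := by
        have h1 : (p : ℤ) ∣ B ^ 2 := by
          have : (p : ℤ) ∣ A * C - (A * C - B ^ 2) := dvd_sub (hpA.mul_right C) (hpd.trans hdvd)
          simpa using this
        exact hpprime.dvd_of_dvd_pow h1
      have hpC : ¬ (p : ℤ) ∣ C := by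
        intro hpC
        have : (p : ℤ) ∣ (Int.gcd A (Int.gcd B C) : ℤ) :=
          Int.dvd_coe_gcd hpA (Int.dvd_coe_gcd hpB hpC)
        rw [hprim] at this
        have h1 : (p : ℤ) ≤ 1 := Int.le_of_dvd one_pos (by exact_mod_cast this)
        have h2 := hp.two_le
        have h3 : (2 : ℤ) ≤ (p : ℤ) := by exact_mod_cast h2
        omega
      have hpa : p ∣ a := Int.natCast_dvd.mp hpA
      have hpD : p ∣ D := Int.natCast_dvd.mp hpd
      have hpg : (p : ℤ) ∣ g := by
        rw [hgdef]
        exact_mod_cast Nat.dvd_gcd (hpa.trans (dvd_pow_self a (by omega))) hpD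
      have hpw : ¬ (p : ℤ) ∣ w := by
        intro hpw
        obtain ⟨w', hw'⟩ := hpw
        have hdpg : (gn * p : ℕ) ∣ D := by
          rw [← Int.natCast_dvd_natCast, hDd]
          push_cast
          exact ⟨w', by rw [hdgw, hw', hgdef]; ring⟩
        have hdpa : (gn * p : ℕ) ∣ a ^ D := by
          rcases Nat.eq_zero_or_pos a with h0 | h0
          · rw [h0, Nat.zero_pow (by omega)]
            exact dvd_zero _
          · have h1 : gn ∣ a ^ (D - 1) := gcd_pow_aux a D h0.ne' hD1
            have : gn * p ∣ a ^ (D - 1) * a := mul_dvd_mul h1 hpa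
            rwa [← pow_succ, Nat.sub_add_cancel hD1] at this
        have : gn * p ∣ gn := Nat.dvd_gcd hdpa hdpg
        have hle := Nat.le_of_dvd (Nat.pos_of_ne_zero hgne) this
        nlinarith [hp.two_le, Nat.pos_of_ne_zero hgne]
      -- Qe ≡ C * w ^ 2 mod p
      have : (p : ℤ) ∣ C * w ^ 2 := by
        have h1 : (p : ℤ) ∣ Qe - g * (A * g + 2 * B * w) := dvd_sub hpQ (hpg.mul_right _)
        have h2 : Qe - g * (A * g + 2 * B * w) = C * w ^ 2 := by rw [hQe]; ring
        rwa [h2] at h1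
      rcases hpprime.dvd_mul.mp this with h | h
      · exact hpC h
      · exact hpw (hpprime.dvd_of_dvd_pow h)
    · -- p ∤ A
      have hpg : ¬ (p : ℤ) ∣ g := by
        intro hpg
        have hpgn : p ∣ gn := Int.natCast_dvd_natCast.mp hpg
        have : p ∣ a ^ D := hpgn.trans (Nat.gcd_dvd_left _ _)
        have : p ∣ a := hp.dvd_of_dvd_pow this
        exact hpA (Int.natCast_dvd.mpr this)
      have hpw : (p : ℤ) ∣ w := by
        rcases hpprime.dvd_mul.mp (hdgw ▸ hpd) with h | h
        · exact absurd h hpg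
        · exact h
      have : (p : ℤ) ∣ A * g ^ 2 := by
        have h1 : (p : ℤ) ∣ Qe - (2 * B * g + C * w) * w := dvd_sub hpQ (hpw.mul_left _)
        have h2 : Qe - (2 * B * g + C * w) * w = A * g ^ 2 := by rw [hQe]; ring
        rwa [h2] at h1
      rcases hpprime.dvd_mul.mp this with h | h
      · exact hpA h
      · exact hpg (hpprime.dvd_of_dvd_pow h)
  -- assemble
  refine ⟨A * g + B * w, B * g + C * w, ?_, ?_⟩
  · set G := Int.gcd (A * g + B * w) (Int.gcd (B * g + C * w) d) with hG
    have hGk : (G : ℤ) ∣ A * g + B * w := Int.gcd_dvd_left _ _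
    have hGl : (G : ℤ) ∣ B * g + C * w := (Int.gcd_dvd_right _ _).trans (Int.gcd_dvd_left _ _)
    have hGd : (G : ℤ) ∣ d := (Int.gcd_dvd_right _ _).trans (Int.gcd_dvd_right _ _)
    have hGQ : (G : ℤ) ∣ Qe := by
      have : (A * g + B * w) * g + (B * g + C * w) * w = Qe := by rw [hQe]; ring
      exact this ▸ dvd_add (hGk.mul_right g) (hGl.mul_right w)
    have : (G : ℤ) ∣ (Int.gcd Qe d : ℤ) := Int.dvd_coe_gcd hGQ hGd
    rw [key] at this
    have h1 := Int.le_of_dvd one_pos this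
    have h2 : G ≠ 0 := by
      intro h
      have h4 : Int.gcd (B * g + C * w) d = 0 := by
        exact_mod_cast (Int.gcd_eq_zero_iff.mp h).2
      exact hd.ne' (Int.gcd_eq_zero_iff.mp h4).2
    omega
  · intro m n hQmn
    have hid : (m * (A * g + B * w) + n * (B * g + C * w)) ^ 2 =
        Qe * (A * m ^ 2 + 2 * B * m * n + C * n ^ 2)
          - (A * C - B ^ 2) * (g * n - w * m) ^ 2 := by rw [hQe]; ring
    rw [hid]
    exact dvd_sub (hQmn.mul_left Qe) ((hdvd.mul_right _))
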